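/- Let (X,d) be a metric space equipped with a Borel measure m, let d_f ≥ 1, and suppose there exists C_V > 1 such that m(B(x,r)) ≤ C_V · max(r, r^{d_f}) for all x ∈ X and all r > 0. Then there exists a constant c₁ > 0, depending only on C_V and d_f, such that for every set E ⊆ X, the Hausdorff 1-content satisfies H¹_∞(E) ≥ c₁ · min(m(E)^{1/d_f}, m(E)). Equivalently: for every countable family of balls B(x_i, r_i), i ∈ I, whose union contains E, one has Σ_{i∈I} r_i ≥ c₁ · min(m(E)^{1/d_f}, m(E)). -/
import Mathlib


open scoped ENNReal

/-- Hausdorff `1`-content: `H¹_∞(E) = inf Σ_i r_i` over countable covers of `E`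
by balls `B(x_i, r_i)`. -/
noncomputable def hausdorffContent1 {X : Type} [MetricSpace X] (E : Set X) : ℝ≥0∞ :=
  ⨅ (c : ℕ → X × ℝ) (_ : E ⊆ ⋃ i, Metric.ball (c i).1 (c i).2),
    ∑' i, ENNReal.ofReal (c i).2

lemma content_key
    {X : Type} [MetricSpace X] [MeasurableSpace X] [BorelSpace X]
    (m : MeasureTheory.Measure X) (df : ℝ) (hdf : 1 ≤ df)
    (CV : ℝ) (hCV : 1 < CV)
    (hvol : ∀ (x : X) (r : ℝ), 0 < r →
      m (Metric.ball x r) ≤ ENNReal.ofReal (CV * max r (r ^ df)))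
    (E : Set X) (ι : Type) (hι : Countable ι) (x : ι → X) (r : ι → ℝ)
    (hcov : E ⊆ ⋃ i, Metric.ball (x i) (r i)) :
    ENNReal.ofReal CV⁻¹ * min (m E ^ (1 / df)) (m E) ≤ ∑' i, ENNReal.ofReal (r i) := by
  have hCV0 : (0:ℝ) < CV := lt_trans zero_lt_one hCV
  have hdf0 : (0:ℝ) < df := lt_of_lt_of_le zero_lt_one hdf
  set S : ℝ≥0∞ := ∑' i, ENNReal.ofReal (r i) with hSdef
  by_cases hStop : S = ⊤
  · rw [hStop]; exact le_top
  by_cases hS0 : S = 0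
  · have hr : ∀ i, r i ≤ 0 := fun i =>
      ENNReal.ofReal_eq_zero.mp ((ENNReal.tsum_eq_zero.mp hS0) i)
    have hE : m E = 0 := by
      have hsub : E ⊆ (∅ : Set X) := by
        refine hcov.trans (Set.iUnion_subset fun i => ?_)
        rw [Metric.ball_eq_empty.mpr (hr i)]
      exact MeasureTheory.measure_mono_null hsub (by simp)
    rw [hE, hS0, ENNReal.zero_rpow_of_pos (by positivity)]
    simp
  -- main case
  have hle1 : (1:ℝ≥0∞) ≤ max 1 (S ^ (df - 1)) := le_max_left _ _
  have hSdf : S * S ^ (df - 1) = S ^ df := by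
    have h1 : df = 1 + (df - 1) := by ring
    rw [h1, ENNReal.rpow_add _ _ hS0 hStop, ENNReal.rpow_one]
    ring_nf
  have hpt : ∀ i, m (Metric.ball (x i) (r i)) ≤
      ENNReal.ofReal (r i) * (ENNReal.ofReal CV * max 1 (S ^ (df - 1))) := by
    intro i
    rcases le_or_gt (r i) 0 with h | h
    · rw [Metric.ball_eq_empty.mpr h]; simp
    · have hterm : ENNReal.ofReal (r i) ≤ S := ENNReal.le_tsum i
      have hne : ENNReal.ofReal (r i) ≠ 0 := by
        simp [ENNReal.ofReal_eq_zero, not_le, h]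
      have hmaxle : ENNReal.ofReal (max (r i) (r i ^ df)) ≤
          ENNReal.ofReal (r i) * max 1 (S ^ (df - 1)) := by
        rcases le_total (r i) (r i ^ df) with h' | h'
        · rw [max_eq_right h', ← ENNReal.ofReal_rpow_of_pos h]
          have : ENNReal.ofReal (r i) ^ df =
              ENNReal.ofReal (r i) * ENNReal.ofReal (r i) ^ (df - 1) := by
            have h1 : df = 1 + (df - 1) := by ring
            rw [h1, ENNReal.rpow_add _ _ hne ENNReal.ofReal_ne_top, ENNReal.rpow_one]
            ring_nf
          rw [this]
          gcongr
          calc ENNReal.ofReal (r i) ^ (df - 1) ≤ S ^ (df - 1) :=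
                ENNReal.rpow_le_rpow hterm (by linarith)
            _ ≤ max 1 (S ^ (df - 1)) := le_max_right _ _
        · rw [max_eq_left h']
          exact le_mul_of_one_le_right' hle1
      calc m (Metric.ball (x i) (r i)) ≤ ENNReal.ofReal (CV * max (r i) (r i ^ df)) :=
            hvol _ _ h
        _ = ENNReal.ofReal CV * ENNReal.ofReal (max (r i) (r i ^ df)) :=
            ENNReal.ofReal_mul hCV0.le
        _ ≤ ENNReal.ofReal CV * (ENNReal.ofReal (r i) * max 1 (S ^ (df - 1))) := by
            gcongr
        _ = ENNReal.ofReal (r i) * (ENNReal.ofReal CV * max 1 (S ^ (df - 1))) := by ring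
  have hm : m E ≤ S * (ENNReal.ofReal CV * max 1 (S ^ (df - 1))) :=
    (MeasureTheory.measure_mono hcov).trans
      ((MeasureTheory.measure_iUnion_le _).trans
        ((ENNReal.tsum_le_tsum hpt).trans_eq ENNReal.tsum_mul_right))
  have hmax : S * max 1 (S ^ (df - 1)) = max S (S ^ df) := by
    rcases le_total (1:ℝ≥0∞) (S ^ (df - 1)) with h | h
    · rw [max_eq_right h, hSdf, max_eq_right]
      calc S = S * 1 := (mul_one S).symm
        _ ≤ S * S ^ (df - 1) := by gcongr
        _ = S ^ df := hSdf
    · rw [max_eq_left h, mul_one, max_eq_left]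
      calc S ^ df = S * S ^ (df - 1) := hSdf.symm
        _ ≤ S * 1 := by gcongr
        _ = S := mul_one S
  have hm2 : m E ≤ ENNReal.ofReal CV * max S (S ^ df) := by
    rw [← hmax]
    calc m E ≤ S * (ENNReal.ofReal CV * max 1 (S ^ (df - 1))) := hm
      _ = ENNReal.ofReal CV * (S * max 1 (S ^ (df - 1))) := by ring
  have hinv : ENNReal.ofReal CV⁻¹ * ENNReal.ofReal CV = 1 := by
    rw [← ENNReal.ofReal_mul (by positivity), inv_mul_cancel₀ hCV0.ne', ENNReal.ofReal_one]
  rcases max_choice S (S ^ df) with h | h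
  · rw [h] at hm2
    calc ENNReal.ofReal CV⁻¹ * min (m E ^ (1 / df)) (m E)
        ≤ ENNReal.ofReal CV⁻¹ * m E := by gcongr; exact min_le_right _ _
      _ ≤ ENNReal.ofReal CV⁻¹ * (ENNReal.ofReal CV * S) := by gcongr
      _ = ENNReal.ofReal CV⁻¹ * ENNReal.ofReal CV * S := by ring
      _ = S := by rw [hinv, one_mul]
  · rw [h] at hm2
    have hA : m E ^ (1 / df) ≤ ENNReal.ofReal CV * S := by
      calc m E ^ (1 / df) ≤ (ENNReal.ofReal CV * S ^ df) ^ (1 / df) :=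
            ENNReal.rpow_le_rpow hm2 (by positivity)
        _ = ENNReal.ofReal CV ^ (1 / df) * (S ^ df) ^ (1 / df) :=
            ENNReal.mul_rpow_of_nonneg _ _ (by positivity)
        _ = ENNReal.ofReal CV ^ (1 / df) * S := by
            rw [← ENNReal.rpow_mul, mul_one_div, div_self hdf0.ne', ENNReal.rpow_one]
        _ ≤ ENNReal.ofReal CV * S := by
            gcongr
            calc ENNReal.ofReal CV ^ (1 / df) ≤ ENNReal.ofReal CV ^ (1:ℝ) :=
                  ENNReal.rpow_le_rpow_of_exponent_le (ENNReal.one_le_ofReal.mpr hCV.le)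
                    (by rw [div_le_one hdf0]; exact hdf)
              _ = ENNReal.ofReal CV := ENNReal.rpow_one _
    calc ENNReal.ofReal CV⁻¹ * min (m E ^ (1 / df)) (m E)
        ≤ ENNReal.ofReal CV⁻¹ * (m E ^ (1 / df)) := by gcongr; exact min_le_left _ _
      _ ≤ ENNReal.ofReal CV⁻¹ * (ENNReal.ofReal CV * S) := by gcongr
      _ = ENNReal.ofReal CV⁻¹ * ENNReal.ofReal CV * S := by ring
      _ = S := by rw [hinv, one_mul]

/-- Lemma 3.3: if `m(B(x,r)) ≤ C_V max(r, r^{d_f})`, then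
`H¹_∞(E) ≥ c₁ min(m(E)^{1/d_f}, m(E))` for every `E ⊆ X`; equivalently, every countable
cover of `E` by balls `B(x_i, r_i)` satisfies `Σ_i r_i ≥ c₁ min(m(E)^{1/d_f}, m(E))`. -/
theorem content_one_lower_bound
    {X : Type} [MetricSpace X] [MeasurableSpace X] [BorelSpace X]
    (m : MeasureTheory.Measure X) (df : ℝ) (hdf : 1 ≤ df)
    (CV : ℝ) (hCV : 1 < CV)
    (hvol : ∀ (x : X) (r : ℝ), 0 < r →
      m (Metric.ball x r) ≤ ENNReal.ofReal (CV * max r (r ^ df))) :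
    ∃ c₁ > (0 : ℝ), ∀ E : Set X,
      (ENNReal.ofReal c₁ * min (m E ^ (1 / df)) (m E) ≤ hausdorffContent1 E) ∧
      ∀ (ι : Type) (_ : Countable ι) (x : ι → X) (r : ι → ℝ),
        E ⊆ ⋃ i, Metric.ball (x i) (r i) →
        ENNReal.ofReal c₁ * min (m E ^ (1 / df)) (m E) ≤ ∑' i, ENNReal.ofReal (r i) := by
  refine ⟨CV⁻¹, by positivity, fun E => ⟨?_, fun ι hι x r hcov =>
    content_key m df hdf CV hCV hvol E ι hι x r hcov⟩⟩
  refine le_iInf fun c => le_iInf fun hc => ?_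
  exact content_key m df hdf CV hCV hvol E ℕ inferInstance (fun i => (c i).1)
    (fun i => (c i).2) hc
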